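/- Let X be a normal space in which every one-point subset is Gδ. Then every element of B₁(X) is either a zero divisor or a unit. -/

import Mathlib

open Filter Topology

def IsBaireOne {X : Type*} [TopologicalSpace X] (f : X → ℝ) : Prop :=
  ∃ F : ℕ → X → ℝ, (∀ n, Continuous (F n)) ∧
    ∀ x, Filter.Tendsto (fun n => F n x) Filter.atTop (nhds (f x))

def B1 (X : Type*) [TopologicalSpace X] : Subring (X → ℝ) where
  carrier := {f | IsBaireOne f}
  zero_mem' := ⟨fun _ _ => 0, fun _ => continuous_const, fun _ => tendsto_const_nhds⟩
  one_mem' := ⟨fun _ _ => 1, fun _ => continuous_const, fun _ => tendsto_const_nhds⟩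
  add_mem' := by
    rintro f g ⟨F, hF, hFf⟩ ⟨G, hG, hGg⟩
    exact ⟨fun n => F n + G n, fun n => (hF n).add (hG n), fun x => (hFf x).add (hGg x)⟩
  mul_mem' := by
    rintro f g ⟨F, hF, hFf⟩ ⟨G, hG, hGg⟩
    exact ⟨fun n => F n * G n, fun n => (hF n).mul (hG n), fun x => (hFf x).mul (hGg x)⟩
  neg_mem' := by
    rintro f ⟨F, hF, hFf⟩
    exact ⟨fun n => -F n, fun n => (hF n).neg, fun x => (hFf x).neg⟩

def zset {X : Type*} [TopologicalSpace X] (f : ↥(B1 X)) : Set X := {x | (f : X → ℝ) x = 0}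

noncomputable def chi {X : Type*} (p : X) : X → ℝ := Set.indicator {p} (fun _ => 1)

def IsFsigma {X : Type*} [TopologicalSpace X] (s : Set X) : Prop :=
  ∃ c : ℕ → Set X, (∀ n, IsClosed (c n)) ∧ s = ⋃ n, c n


lemma chi_mem_B1 {X : Type*} [TopologicalSpace X] [T1Space X] [NormalSpace X]
    (p : X) (hGp : IsGδ ({p} : Set X)) : IsBaireOne (chi p) := by
  obtain ⟨U, hUo, hU⟩ := hGp.eq_iInter_nat
  have hpU : ∀ n, p ∈ U n := fun n => by
    have : p ∈ ⋂ n, U n := hU ▸ rfl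
    exact Set.mem_iInter.1 this n
  have key : ∀ n : ℕ, ∃ h : C(X, ℝ), Set.EqOn h 0 (U n)ᶜ ∧ Set.EqOn h 1 {p} := by
    intro n
    obtain ⟨h, h0, h1, _⟩ := exists_continuous_zero_one_of_isClosed
      (isClosed_compl_iff.2 (hUo n)) isClosed_singleton
      (Set.disjoint_left.2 (fun a ha hap => ha (by rw [Set.mem_singleton_iff.1 hap]; exact hpU n)))
    exact ⟨h, h0, h1⟩
  choose h h0 h1 using key
  refine ⟨fun n x => ∏ i ∈ Finset.range (n+1), h i x,
    fun n => continuous_finset_prod _ (fun i _ => (h i).continuous), fun x => ?_⟩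
  by_cases hx : x = p
  · subst hx
    have : ∀ n : ℕ, (∏ i ∈ Finset.range (n+1), h i x) = 1 := by
      intro n
      refine Finset.prod_eq_one (fun i _ => ?_)
      have := h1 i (Set.mem_singleton x); simpa using this
    simp only [this]
    have : chi x x = 1 := by simp [chi]
    rw [this]; exact tendsto_const_nhds
  · have hxU : x ∉ ⋂ n, U n := by rw [← hU]; simpa using hx
    obtain ⟨m, hm⟩ : ∃ m, x ∉ U m := by simpa using hxU
    have hchi : chi p x = 0 := by simp [chi, hx]
    rw [hchi]
    apply tendsto_atTop_of_eventually_const (i₀ := m)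
    intro n hn
    refine Finset.prod_eq_zero (Finset.mem_range.2 (Nat.lt_succ_of_le hn)) ?_
    have := h0 m hm; simpa using this

lemma inv_mem_B1 {X : Type*} [TopologicalSpace X] (f : X → ℝ) (hf : IsBaireOne f)
    (hne : ∀ x, f x ≠ 0) : IsBaireOne (fun x => (f x)⁻¹) := by
  obtain ⟨F, hFc, hFt⟩ := hf
  have hden : ∀ n x, F n x ^ 2 + 1 / (n + 1 : ℝ) ≠ 0 := by
    intro n x
    positivity
  refine ⟨fun n x => F n x / (F n x ^ 2 + 1 / (n + 1 : ℝ)),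
    fun n => (hFc n).div (((hFc n).pow 2).add continuous_const) (fun x => hden n x), fun x => ?_⟩
  have h1 : Tendsto (fun n : ℕ => F n x ^ 2 + 1 / (n + 1 : ℝ)) atTop (nhds (f x ^ 2)) := by
    have := ((hFt x).pow 2).add tendsto_one_div_add_atTop_nhds_zero_nat
    simpa using this
  have h2 : Tendsto (fun n : ℕ => F n x / (F n x ^ 2 + 1 / (n + 1 : ℝ))) atTop
      (nhds (f x / f x ^ 2)) := (hFt x).div h1 (pow_ne_zero 2 (hne x))
  have : f x / f x ^ 2 = (f x)⁻¹ := by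
    rw [sq, div_mul_eq_div_div, div_self (hne x), one_div]
  rwa [this] at h2

theorem stmt_8 {X : Type*} [TopologicalSpace X] [T1Space X] [NormalSpace X]
    (hG : ∀ p : X, IsGδ ({p} : Set X)) (f : ↥(B1 X)) :
    (∃ g : ↥(B1 X), g ≠ 0 ∧ f * g = 0) ∨ IsUnit f := by
  by_cases h : ∃ p, (f : X → ℝ) p = 0
  · obtain ⟨p, hp⟩ := h
    left
    refine ⟨⟨chi p, chi_mem_B1 p (hG p)⟩, ?_, ?_⟩
    · intro hzero
      have : chi p p = 0 := congrFun (congrArg Subtype.val hzero) p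
      simp [chi] at this
    · apply Subtype.ext
      funext x
      show (f : X → ℝ) x * chi p x = 0
      by_cases hx : x = p
      · subst hx; simp [hp]
      · simp [chi, hx]
  · right
    push_neg at h
    refine IsUnit.of_mul_eq_one (a := f) ⟨fun x => ((f : X → ℝ) x)⁻¹, inv_mem_B1 _ f.2 h⟩ ?_
    apply Subtype.ext
    funext x
    exact mul_inv_cancel₀ (h x)
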